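/- arXiv:2112.07952 — 2 statements merged into one kernel-verified Lean document; each statement's English description precedes it below -/
import Mathlib

section
/- For every d ∈ ω \ {0}: non(HDZ) = non(HDZ_{ℝ^d}) and cov(HDZ) = cov(HDZ_{ℝ^d}). -/
open Set

/-- The Cantor space `2^ω = ℕ → Bool` carries the metric
`d(x,y) = 2^{-min{n : x n ≠ y n}}` (and `d(x,x) = 0`). -/
noncomputable local instance cantorMetric : MetricSpace (ℕ → Bool) := PiNat.metricSpace

/-- `HDZ X` is the ideal of subsets of `X` of Hausdorff dimension `0`. -/
def HDZ (X : Type*) [EMetricSpace X] : Set (Set X) := {A : Set X | dimH A = 0}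

/-- The uniformity number of a family `I` of subsets of `X`:
the least cardinality of a subset of `X` not belonging to `I`. -/
noncomputable def idealNon {X : Type*} (I : Set (Set X)) : Cardinal :=
  sInf {c : Cardinal | ∃ A : Set X, A ∉ I ∧ c = Cardinal.mk A}

/-- The covering number of a family `I` of subsets of `X`:
the least cardinality of a subfamily of `I` covering `X`. -/
noncomputable def idealCov {X : Type*} (I : Set (Set X)) : Cardinal :=
  sInf {c : Cardinal | ∃ F : Set (Set X), F ⊆ I ∧ ⋃₀ F = univ ∧ c = Cardinal.mk F}

section Abstract

variable {X Y : Type} [EMetricSpace X] [EMetricSpace Y]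

/-- `f` pulls back dimension-zero sets to dimension-zero sets. -/
def PullsBack (f : X → Y) : Prop := ∀ S : Set Y, dimH S = 0 → dimH (f ⁻¹' S) = 0

lemma image_notin_HDZ {f : X → Y} (hf : PullsBack f) {A : Set X} (hA : A ∉ HDZ X) :
    f '' A ∉ HDZ Y := by
  intro h
  exact hA (le_antisymm ((dimH_mono (subset_preimage_image f A)).trans_eq (hf _ h)) zero_le)

lemma csInf_le_csInf_of_forall {S T : Set Cardinal} (hT : T.Nonempty)
    (h : ∀ c ∈ T, ∃ c' ∈ S, c' ≤ c) : sInf S ≤ sInf T := by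
  obtain ⟨c', hc', hle⟩ := h _ (csInf_mem hT)
  exact (csInf_le (OrderBot.bddBelow _) hc').trans hle

lemma idealNon_eq {f : X → Y} {g : Y → X} (hf : PullsBack f) (hg : PullsBack g) :
    idealNon (HDZ X) = idealNon (HDZ Y) := by
  have key : ∀ {W Z : Type} [EMetricSpace W] [EMetricSpace Z] (h : W → Z), PullsBack h →
      ∀ c ∈ {c : Cardinal | ∃ A : Set W, A ∉ HDZ W ∧ c = Cardinal.mk A},
        ∃ c' ∈ {c : Cardinal | ∃ A : Set Z, A ∉ HDZ Z ∧ c = Cardinal.mk A}, c' ≤ c := by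
    intro W Z _ _ h hP c hc
    obtain ⟨A, hA, rfl⟩ := hc
    exact ⟨Cardinal.mk (h '' A), ⟨h '' A, image_notin_HDZ hP hA, rfl⟩, Cardinal.mk_image_le⟩
  rcases eq_empty_or_nonempty {c : Cardinal | ∃ A : Set X, A ∉ HDZ X ∧ c = Cardinal.mk A} with hX | hX
  · rcases eq_empty_or_nonempty {c : Cardinal | ∃ A : Set Y, A ∉ HDZ Y ∧ c = Cardinal.mk A} with hY | hY
    · unfold idealNon; rw [hX, hY]
    · obtain ⟨c, hc⟩ := hY
      obtain ⟨c', hc', -⟩ := key g hg c hc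
      exact absurd hc' (by rw [hX]; exact notMem_empty _)
  · rcases eq_empty_or_nonempty {c : Cardinal | ∃ A : Set Y, A ∉ HDZ Y ∧ c = Cardinal.mk A} with hY | hY
    · obtain ⟨c, hc⟩ := hX
      obtain ⟨c', hc', -⟩ := key f hf c hc
      exact absurd hc' (by rw [hY]; exact notMem_empty _)
    · exact le_antisymm (csInf_le_csInf_of_forall hY (key g hg))
        (csInf_le_csInf_of_forall hX (key f hf))

lemma idealCov_le {f : X → Y} (hf : PullsBack f) :
    idealCov (HDZ X) ≤ idealCov (HDZ Y) := by
  apply csInf_le_csInf_of_forall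
  · refine ⟨Cardinal.mk ((fun y => ({y} : Set Y)) '' (univ : Set Y)),
      (fun y => ({y} : Set Y)) '' univ, ?_, ?_, rfl⟩
    · rintro S ⟨y, -, rfl⟩
      exact dimH_subsingleton (subsingleton_singleton)
    · ext y; simp
  · rintro c ⟨F, hF, hcov, rfl⟩
    refine ⟨Cardinal.mk ((fun S => f ⁻¹' S) '' F), ⟨(fun S => f ⁻¹' S) '' F, ?_, ?_, rfl⟩,
      Cardinal.mk_image_le⟩
    · rintro S ⟨T, hT, rfl⟩
      exact hf T (hF hT)
    · apply eq_univ_of_forall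
      intro x
      have : f x ∈ ⋃₀ F := by rw [hcov]; trivial
      obtain ⟨T, hT, hxT⟩ := this
      exact ⟨f ⁻¹' T, ⟨T, hT, rfl⟩, hxT⟩

/-- Sufficient condition for `PullsBack`: a countable family of Hölder "partial inverses". -/
lemma pullsBack_of_holder_inverses (f : X → Y) (u : ℕ → Y → X) (s : ℕ → Set Y)
    (C : ℕ → NNReal) (r : NNReal) (hr : 0 < r)
    (hu : ∀ n, HolderOnWith (C n) r (u n) (s n))
    (hsec : ∀ x, ∃ n, f x ∈ s n ∧ u n (f x) = x) : PullsBack f := by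
  intro S hS
  have hsub : f ⁻¹' S ⊆ ⋃ n, u n '' (S ∩ s n) := by
    intro x hx
    obtain ⟨n, h1, h2⟩ := hsec x
    exact mem_iUnion.2 ⟨n, ⟨f x, ⟨hx, h1⟩, h2⟩⟩
  refine le_antisymm ?_ zero_le
  calc dimH (f ⁻¹' S) ≤ dimH (⋃ n, u n '' (S ∩ s n)) := dimH_mono hsub
    _ = ⨆ n, dimH (u n '' (S ∩ s n)) := dimH_iUnion _
    _ ≤ ⨆ n, dimH (S ∩ s n) / r := iSup_mono fun n =>
        ((hu n).mono inter_subset_right).dimH_image_le hr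
    _ ≤ 0 := by
        refine iSup_le fun n => ?_
        have : dimH (S ∩ s n) = 0 :=
          le_antisymm ((dimH_mono inter_subset_left).trans_eq hS) zero_le
        rw [this, ENNReal.zero_div]

end Abstract

/-- numeric value of a bit -/
def bitval (b : Bool) : ℝ := cond b 1 0

lemma bitval_nonneg (b : Bool) : 0 ≤ bitval b := by cases b <;> simp [bitval]

lemma bitval_le_one (b : Bool) : bitval b ≤ 1 := by cases b <;> simp [bitval]

/-- binary value map -/
noncomputable def val2 (x : ℕ → Bool) : ℝ := ∑' n, bitval (x n) * (1/2)^(n+1)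

/-- ternary value map -/
noncomputable def val3 (x : ℕ → Bool) : ℝ := ∑' n, 2 * bitval (x n) * (1/3)^(n+1)

lemma summable_half : Summable (fun n : ℕ => (1/2:ℝ)^(n+1)) := by
  simpa [pow_succ, mul_comm] using
    (summable_geometric_of_lt_one (by norm_num : (0:ℝ) ≤ 1/2) (by norm_num)).mul_left (1/2 : ℝ)

lemma summable_third : Summable (fun n : ℕ => 2 * (1/3:ℝ)^(n+1)) := by
  apply Summable.mul_left
  simpa [pow_succ, mul_comm] using
    (summable_geometric_of_lt_one (by norm_num : (0:ℝ) ≤ 1/3) (by norm_num)).mul_left (1/3 : ℝ)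

lemma summable2 (x : ℕ → Bool) : Summable (fun n => bitval (x n) * (1/2)^(n+1)) := by
  refine Summable.of_nonneg_of_le
    (fun n => mul_nonneg (bitval_nonneg _) (by positivity)) (fun n => ?_) summable_half
  have := bitval_le_one (x n)
  nlinarith [pow_pos (by norm_num : (0:ℝ) < 1/2) (n+1)]

lemma summable3 (x : ℕ → Bool) : Summable (fun n => 2 * bitval (x n) * (1/3)^(n+1)) := by
  refine Summable.of_nonneg_of_le
    (fun n => mul_nonneg (mul_nonneg (by norm_num) (bitval_nonneg _)) (by positivity))
    (fun n => ?_) summable_third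
  have := bitval_le_one (x n)
  nlinarith [pow_pos (by norm_num : (0:ℝ) < 1/3) (n+1)]

lemma tsum_half_tail (k : ℕ) : ∑' n : ℕ, (1/2:ℝ)^(n+k+1) = (1/2)^k := by
  have : ∀ n : ℕ, (1/2:ℝ)^(n+k+1) = (1/2)^(k+1) * (1/2)^n := by
    intro n; ring
  rw [tsum_congr this, tsum_mul_left,
    tsum_geometric_of_lt_one (by norm_num : (0:ℝ) ≤ 1/2) (by norm_num)]
  norm_num [pow_succ]
  ring

lemma tsum_third_tail (k : ℕ) : ∑' n : ℕ, 2 * (1/3:ℝ)^(n+k+1) = (1/3)^k := by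
  have : ∀ n : ℕ, 2 * (1/3:ℝ)^(n+k+1) = (2 * (1/3)^(k+1)) * (1/3)^n := by
    intro n; ring
  rw [tsum_congr this, tsum_mul_left,
    tsum_geometric_of_lt_one (by norm_num : (0:ℝ) ≤ 1/3) (by norm_num)]
  norm_num [pow_succ]
  ring

lemma val2_tail_mem (x : ℕ → Bool) (k : ℕ) :
    0 ≤ ∑' n : ℕ, bitval (x (n+k)) * (1/2:ℝ)^(n+k+1) ∧
      ∑' n : ℕ, bitval (x (n+k)) * (1/2:ℝ)^(n+k+1) ≤ (1/2)^k := by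
  have hs : Summable (fun n : ℕ => bitval (x (n+k)) * (1/2:ℝ)^(n+k+1)) :=
    ((summable2 x).comp_injective (add_left_injective k))
  constructor
  · exact tsum_nonneg (fun n => mul_nonneg (bitval_nonneg _) (by positivity))
  · rw [← tsum_half_tail k]
    refine Summable.tsum_le_tsum (fun n => ?_) hs (by simpa [Function.comp_def] using summable_half.comp_injective (add_left_injective k))
    have := bitval_le_one (x (n+k))
    nlinarith [pow_pos (by norm_num : (0:ℝ) < 1/2) (n+k+1)]

/-- Key upper bound: agreement on an initial segment bounds the binary values. -/
lemma val2_dist_le {x y : ℕ → Bool} {k : ℕ} (h : ∀ i < k, x i = y i) :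
    |val2 x - val2 y| ≤ (1/2:ℝ)^k := by
  have hx := (Summable.sum_add_tsum_nat_add k (summable2 x)).symm
  have hy := (Summable.sum_add_tsum_nat_add k (summable2 y)).symm
  have hfin : ∑ i ∈ Finset.range k, bitval (x i) * (1/2:ℝ)^(i+1)
      = ∑ i ∈ Finset.range k, bitval (y i) * (1/2:ℝ)^(i+1) := by
    refine Finset.sum_congr rfl (fun i hi => ?_)
    rw [h i (Finset.mem_range.1 hi)]
  obtain ⟨h1x, h2x⟩ := val2_tail_mem x k
  obtain ⟨h1y, h2y⟩ := val2_tail_mem y k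
  have : val2 x - val2 y = (∑' n : ℕ, bitval (x (n+k)) * (1/2:ℝ)^(n+k+1))
      - (∑' n : ℕ, bitval (y (n+k)) * (1/2:ℝ)^(n+k+1)) := by
    rw [val2, val2, hx, hy, hfin]; ring
  rw [this]
  rw [abs_le]
  constructor <;> linarith

lemma val3_tail_mem (x : ℕ → Bool) (k : ℕ) :
    0 ≤ ∑' n : ℕ, 2 * bitval (x (n+k)) * (1/3:ℝ)^(n+k+1) ∧
      ∑' n : ℕ, 2 * bitval (x (n+k)) * (1/3:ℝ)^(n+k+1) ≤ (1/3)^k := by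
  have hs : Summable (fun n : ℕ => 2 * bitval (x (n+k)) * (1/3:ℝ)^(n+k+1)) :=
    ((summable3 x).comp_injective (add_left_injective k))
  constructor
  · exact tsum_nonneg (fun n =>
      mul_nonneg (mul_nonneg (by norm_num) (bitval_nonneg _)) (by positivity))
  · rw [← tsum_third_tail k]
    refine Summable.tsum_le_tsum (fun n => ?_) hs (by simpa [Function.comp_def] using summable_third.comp_injective (add_left_injective k))
    have := bitval_le_one (x (n+k))
    nlinarith [pow_pos (by norm_num : (0:ℝ) < 1/3) (n+k+1)]


lemma val3_dist_ge_aux {x y : ℕ → Bool} {m : ℕ} (h : ∀ i < m, x i = y i)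
    (hxm : x m = true) (hym : y m = false) :
    (1/3:ℝ)^(m+1) ≤ |val3 x - val3 y| := by
  have hx := (Summable.sum_add_tsum_nat_add (m+1) (summable3 x)).symm
  have hy := (Summable.sum_add_tsum_nat_add (m+1) (summable3 y)).symm
  have hfin : ∑ i ∈ Finset.range (m+1), 2 * bitval (x i) * (1/3:ℝ)^(i+1)
      = (∑ i ∈ Finset.range (m+1), 2 * bitval (y i) * (1/3:ℝ)^(i+1)) + 2 * (1/3)^(m+1) := by
    rw [Finset.sum_range_succ, Finset.sum_range_succ]
    have : ∑ i ∈ Finset.range m, 2 * bitval (x i) * (1/3:ℝ)^(i+1)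
        = ∑ i ∈ Finset.range m, 2 * bitval (y i) * (1/3:ℝ)^(i+1) := by
      refine Finset.sum_congr rfl (fun i hi => ?_)
      rw [h i (Finset.mem_range.1 hi)]
    rw [this, hxm, hym]
    simp [bitval]
    try ring
  obtain ⟨h1x, h2x⟩ := val3_tail_mem x (m+1)
  obtain ⟨h1y, h2y⟩ := val3_tail_mem y (m+1)
  have hdiff : val3 x - val3 y = 2 * (1/3)^(m+1)
      + ((∑' n : ℕ, 2 * bitval (x (n+(m+1))) * (1/3:ℝ)^(n+(m+1)+1))
      - (∑' n : ℕ, 2 * bitval (y (n+(m+1))) * (1/3:ℝ)^(n+(m+1)+1))) := by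
    rw [val3, val3, hx, hy, hfin]; ring
  have : (1/3:ℝ)^(m+1) ≤ val3 x - val3 y := by rw [hdiff]; linarith
  exact this.trans (le_abs_self _)

/-- Key lower bound for the ternary embedding. -/
lemma val3_dist_ge {x y : ℕ → Bool} {m : ℕ} (h : ∀ i < m, x i = y i) (hm : x m ≠ y m) :
    (1/3:ℝ)^(m+1) ≤ |val3 x - val3 y| := by
  rcases Bool.eq_false_or_eq_true (x m) with hxm | hxm
  case inl =>
    have hym : y m = false := by
      cases hy : y m
      · rfl
      · exact absurd (hxm.trans hy.symm) hm
    exact val3_dist_ge_aux h hxm hym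
  case inr =>
    have hym : y m = true := by
      cases hy : y m
      · exact absurd (hxm.trans hy.symm) hm
      · rfl
    have h' : ∀ i < m, y i = x i := fun i hi => (h i hi).symm
    rw [abs_sub_comm]
    exact val3_dist_ge_aux h' hym hxm

/-- binary digits of a real number -/
noncomputable def dig (c : ℝ) (n : ℕ) : Bool := decide ((⌊(2:ℝ)^(n+1) * c⌋ : ℤ) - 2 * ⌊(2:ℝ)^n * c⌋ = 1)

lemma floor_two_mul_cases (y : ℝ) : ⌊2*y⌋ = 2*⌊y⌋ ∨ ⌊2*y⌋ = 2*⌊y⌋+1 := by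
  have h1 : (2*⌊y⌋ : ℤ) ≤ ⌊2*y⌋ := Int.le_floor.2 (by push_cast; linarith [Int.floor_le y])
  have h2 : ⌊2*y⌋ < 2*⌊y⌋ + 2 := Int.floor_lt.2 (by push_cast; linarith [Int.lt_floor_add_one y])
  omega

lemma dig_val (c : ℝ) (n : ℕ) :
    (bitval (dig c n) : ℝ) = ((⌊(2:ℝ)^(n+1) * c⌋ : ℤ) : ℝ) - 2 * ((⌊(2:ℝ)^n * c⌋ : ℤ) : ℝ) := by
  have key := floor_two_mul_cases ((2:ℝ)^n * c)
  have h2 : (2:ℝ) * ((2:ℝ)^n * c) = (2:ℝ)^(n+1) * c := by ring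
  rw [h2] at key
  rcases key with hk | hk
  · have hd : dig c n = false := by
      simp only [dig, decide_eq_false_iff_not]
      omega
    rw [hd, hk]; push_cast; simp [bitval]
  · have hd : dig c n = true := by
      simp only [dig, decide_eq_true_eq]
      omega
    rw [hd, hk]; push_cast; simp [bitval]

lemma dig_partial {c : ℝ} (hc : c ∈ Ico (0:ℝ) 1) (N : ℕ) :
    ∑ n ∈ Finset.range N, bitval (dig c n) * (1/2:ℝ)^(n+1)
      = ((⌊(2:ℝ)^N * c⌋ : ℤ) : ℝ) / 2^N := by
  induction N with
  | zero =>
    have : ⌊(2:ℝ)^0 * c⌋ = 0 := by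
      rw [pow_zero, one_mul]
      exact Int.floor_eq_zero_iff.2 hc
    rw [pow_zero, one_mul] at this
    simp [this]
  | succ N ih =>
    rw [Finset.sum_range_succ, ih, dig_val]
    have hp : (0:ℝ) < 2^N := by positivity
    have hp1 : (0:ℝ) < 2^(N+1) := by positivity
    rw [one_div_pow, pow_succ]
    field_simp
    ring

lemma val2_surj {c : ℝ} (hc : c ∈ Ico (0:ℝ) 1) : ∃ x : ℕ → Bool, val2 x = c := by
  refine ⟨dig c, ?_⟩
  have hs := summable2 (dig c)
  have hten := hs.hasSum.tendsto_sum_nat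
  have hb : ∀ N : ℕ, ‖(∑ n ∈ Finset.range N, bitval (dig c n) * (1/2:ℝ)^(n+1)) - c‖
      ≤ (1/2:ℝ)^N := by
    intro N
    rw [dig_partial hc N]
    have hp : (0:ℝ) < 2^N := by positivity
    have h1 : ((⌊(2:ℝ)^N * c⌋ : ℤ) : ℝ) ≤ 2^N * c := Int.floor_le _
    have h2 : 2^N * c < ((⌊(2:ℝ)^N * c⌋ : ℤ) : ℝ) + 1 := Int.lt_floor_add_one _
    have he : (1/2:ℝ)^N = 1/2^N := by rw [one_div_pow]
    rw [Real.norm_eq_abs, abs_le, he]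
    constructor
    · rw [neg_le, neg_sub, sub_le_iff_le_add, ← add_div, le_div_iff₀ hp]
      linarith
    · rw [sub_le_iff_le_add]
      have : ((⌊(2:ℝ)^N * c⌋ : ℤ) : ℝ) / 2^N ≤ c := by
        rw [div_le_iff₀ hp]; linarith
      have hpos : (0:ℝ) ≤ 1/2^N := by positivity
      linarith
  have h0 : Filter.Tendsto
      (fun N : ℕ => (∑ n ∈ Finset.range N, bitval (dig c n) * (1/2:ℝ)^(n+1)) - c)
      Filter.atTop (nhds 0) :=
    squeeze_zero_norm hb (tendsto_pow_atTop_nhds_zero_of_lt_one (by norm_num) (by norm_num))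
  have h2 := tendsto_sub_nhds_zero_iff.1 h0
  simpa [val2] using tendsto_nhds_unique hten h2

section Cantor

lemma cdist_eq_of_ne {x y : ℕ → Bool} (h : x ≠ y) :
    dist x y = (1/2:ℝ) ^ PiNat.firstDiff x y := PiNat.dist_eq_of_ne h

lemma cdist_le_of_agree {x y : ℕ → Bool} {k : ℕ} (h : ∀ i < k, x i = y i) :
    dist x y ≤ (1/2:ℝ)^k := by
  rcases eq_or_ne x y with rfl | hne
  · rw [dist_self]; positivity
  · rw [cdist_eq_of_ne hne]
    have hk : k ≤ PiNat.firstDiff x y := by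
      by_contra hlt
      push_neg at hlt
      exact PiNat.apply_firstDiff_ne hne (h _ hlt)
    exact pow_le_pow_of_le_one (by norm_num) (by norm_num) hk

/-! interleaving -/

def sliceF (d i : ℕ) (x : ℕ → Bool) : ℕ → Bool := fun m => x (i + m * d)

def mergeF (d : ℕ) (y : ℕ → ℕ → Bool) : ℕ → Bool := fun n => y (n % d) (n / d)

lemma sliceF_mergeF {d : ℕ} (hd : 0 < d) (y : ℕ → ℕ → Bool) {i : ℕ} (hi : i < d) :
    sliceF d i (mergeF d y) = y i := by
  funext m
  simp only [sliceF, mergeF]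
  rw [Nat.add_mul_mod_self_right, Nat.mod_eq_of_lt hi,
    Nat.add_mul_div_right _ _ hd, Nat.div_eq_of_lt hi, zero_add]

noncomputable def Vmap (d : ℕ) (x : ℕ → Bool) : EuclideanSpace ℝ (Fin d) :=
  (WithLp.equiv 2 (Fin d → ℝ)).symm (fun i => val2 (sliceF d (i : ℕ) x))

lemma Vmap_apply (d : ℕ) (x : ℕ → Bool) (i : Fin d) :
    Vmap d x i = val2 (sliceF d (i : ℕ) x) := rfl

lemma dist_Vmap_le {d : ℕ} (hd : 0 < d) (x y : ℕ → Bool) :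
    dist (Vmap d x) (Vmap d y) ≤ (Real.sqrt d * 2) * dist x y ^ ((1:ℝ)/d) := by
  rcases eq_or_ne x y with rfl | hne
  · rw [dist_self, dist_self, Real.zero_rpow (by positivity), mul_zero]
  · set m := PiNat.firstDiff x y with hm
    have hagree : ∀ i < m, x i = y i := fun i hi => PiNat.apply_eq_of_lt_firstDiff hi
    have hcomp : ∀ i : Fin d, |val2 (sliceF d (i:ℕ) x) - val2 (sliceF d (i:ℕ) y)|
        ≤ (1/2:ℝ)^(m / d) := by
      intro i
      apply val2_dist_le
      intro j hj
      apply hagree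
      have h1 : (j+1) * d ≤ (m / d) * d := Nat.mul_le_mul_right _ hj
      have h2 : (m / d) * d ≤ m := Nat.div_mul_le_self m d
      have h3 : (i : ℕ) < d := i.2
      have h4 : (j+1)*d = j*d + d := by ring
      omega
    have hdist : dist x y = (1/2:ℝ)^m := cdist_eq_of_ne hne
    have h1 : dist (Vmap d x) (Vmap d y) ≤ Real.sqrt (∑ _i : Fin d, ((1/2:ℝ)^(m/d))^2) := by
      rw [EuclideanSpace.dist_eq]
      apply Real.sqrt_le_sqrt
      apply Finset.sum_le_sum
      intro i _
      have habs : dist (Vmap d x i) (Vmap d y i)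
          = |val2 (sliceF d (i:ℕ) x) - val2 (sliceF d (i:ℕ) y)| := by
        rw [Vmap_apply, Vmap_apply, Real.dist_eq]
      rw [habs]
      exact pow_le_pow_left₀ (abs_nonneg _) (hcomp i) 2
    have h2 : Real.sqrt (∑ _i : Fin d, ((1/2:ℝ)^(m/d))^2) = Real.sqrt d * (1/2:ℝ)^(m/d) := by
      rw [Finset.sum_const, Finset.card_univ, Fintype.card_fin, nsmul_eq_mul,
        Real.sqrt_mul (by positivity), Real.sqrt_sq (by positivity)]
    have h3 : ((1/2:ℝ))^(m/d) ≤ 2 * ((1/2:ℝ)^m) ^ ((1:ℝ)/d) := by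
      have key : ((1/2:ℝ)^m) ^ ((1:ℝ)/d) = (1/2:ℝ) ^ ((m:ℝ)/d) := by
        rw [← Real.rpow_natCast (1/2:ℝ) m, ← Real.rpow_mul (by norm_num)]
        congr 1
        ring
      rw [key]
      have hdr : (0:ℝ) < d := by exact_mod_cast hd
      have h5 : m < (m / d + 1) * d := by
        have h6 := Nat.div_add_mod m d
        have h7 := Nat.mod_lt m hd
        have h8 : (m/d + 1) * d = d * (m/d) + d := by ring
        omega
      have hexp : (m:ℝ)/d ≤ (↑(m/d) + 1 : ℝ) := by
        rw [div_le_iff₀ hdr]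
        exact_mod_cast h5.le
      have hmono : (1/2:ℝ) ^ ((↑(m/d) + 1 : ℝ)) ≤ (1/2:ℝ) ^ ((m:ℝ)/d) :=
        Real.rpow_le_rpow_of_exponent_ge (by norm_num) (by norm_num) hexp
      have heq : (1/2:ℝ) ^ ((↑(m/d) + 1 : ℝ)) = (1/2:ℝ)^(m/d) * (1/2) := by
        rw [Real.rpow_add (by norm_num), Real.rpow_natCast, Real.rpow_one]
      rw [heq] at hmono
      linarith
    calc dist (Vmap d x) (Vmap d y) ≤ Real.sqrt d * (1/2:ℝ)^(m/d) := h2 ▸ h1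
      _ ≤ Real.sqrt d * (2 * ((1/2:ℝ)^m) ^ ((1:ℝ)/d)) :=
          mul_le_mul_of_nonneg_left h3 (Real.sqrt_nonneg _)
      _ = (Real.sqrt d * 2) * dist x y ^ ((1:ℝ)/d) := by rw [hdist]; ring

/-! the ternary embedding -/

noncomputable def femb (d : ℕ) (x : ℕ → Bool) : EuclideanSpace ℝ (Fin d) :=
  (WithLp.equiv 2 (Fin d → ℝ)).symm (fun _ => val3 x)

lemma dist_femb (d : ℕ) (x y : ℕ → Bool) :
    dist (femb d x) (femb d y) = Real.sqrt d * |val3 x - val3 y| := by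
  rw [EuclideanSpace.dist_eq]
  have hc : ∀ i : Fin d, dist (femb d x i) (femb d y i) ^ 2 = |val3 x - val3 y|^2 := by
    intro i
    show dist (val3 x) (val3 y) ^ 2 = _
    rw [Real.dist_eq]
  rw [Finset.sum_congr rfl (fun i _ => hc i), Finset.sum_const, Finset.card_univ,
    Fintype.card_fin, nsmul_eq_mul, Real.sqrt_mul (Nat.cast_nonneg d),
    Real.sqrt_sq (abs_nonneg _)]

noncomputable def r0 : ℝ := Real.logb (1/3) (1/2)

lemma r0_pos : 0 < r0 := by
  have h1 : Real.log (1/2) < 0 := Real.log_neg (by norm_num) (by norm_num)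
  have h2 : Real.log (1/3) < 0 := Real.log_neg (by norm_num) (by norm_num)
  rw [r0, Real.logb]
  exact div_pos_of_neg_of_neg h1 h2

lemma third_rpow : ((1/3:ℝ)) ^ r0 = 1/2 :=
  Real.rpow_logb (by norm_num) (by norm_num) (by norm_num)

lemma cdist_le_femb {d : ℕ} (hd : 0 < d) (x y : ℕ → Bool) :
    dist x y ≤ 2 * dist (femb d x) (femb d y) ^ r0 := by
  rcases eq_or_ne x y with rfl | hne
  · rw [dist_self, dist_self]
    positivity
  · set m := PiNat.firstDiff x y with hm
    have hagree : ∀ i < m, x i = y i := fun i hi => PiNat.apply_eq_of_lt_firstDiff hi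
    have hne' : x m ≠ y m := PiNat.apply_firstDiff_ne hne
    have hlow : (1/3:ℝ)^(m+1) ≤ |val3 x - val3 y| := val3_dist_ge hagree hne'
    have hd1 : (1:ℝ) ≤ Real.sqrt d := by
      rw [show (1:ℝ) = Real.sqrt 1 by simp]
      exact Real.sqrt_le_sqrt (by exact_mod_cast hd)
    have hlow2 : (1/3:ℝ)^(m+1) ≤ dist (femb d x) (femb d y) := by
      rw [dist_femb]
      nlinarith [abs_nonneg (val3 x - val3 y), pow_pos (show (0:ℝ) < 1/3 by norm_num) (m+1)]
    have hr : ((1/3:ℝ)^(m+1)) ^ r0 ≤ dist (femb d x) (femb d y) ^ r0 :=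
      Real.rpow_le_rpow (by positivity) hlow2 r0_pos.le
    have hkey : ((1/3:ℝ)^(m+1)) ^ r0 = (1/2:ℝ)^(m+1) := by
      rw [← Real.rpow_natCast (1/3:ℝ) (m+1), ← Real.rpow_mul (by norm_num), mul_comm,
        Real.rpow_mul (by norm_num), third_rpow, Real.rpow_natCast]
    rw [hkey] at hr
    rw [cdist_eq_of_ne hne]
    calc (1/2:ℝ)^m = 2 * (1/2:ℝ)^(m+1) := by ring
      _ ≤ 2 * dist (femb d x) (femb d y) ^ r0 := by linarith

/-! Hölder conversion -/

lemma holderOnWith_of_dist {X Y : Type*} [MetricSpace X] [MetricSpace Y] {C : ℝ} (hC : 0 ≤ C)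
    {r : NNReal} {f : X → Y} {s : Set X}
    (h : ∀ x ∈ s, ∀ y ∈ s, dist (f x) (f y) ≤ C * dist x y ^ (r:ℝ)) :
    HolderOnWith C.toNNReal r f s := by
  intro x hx y hy
  rw [edist_dist, edist_dist]
  calc ENNReal.ofReal (dist (f x) (f y)) ≤ ENNReal.ofReal (C * dist x y ^ (r:ℝ)) :=
      ENNReal.ofReal_le_ofReal (h x hx y hy)
    _ = ENNReal.ofReal C * ENNReal.ofReal (dist x y ^ (r:ℝ)) := ENNReal.ofReal_mul hC
    _ = ↑C.toNNReal * ENNReal.ofReal (dist x y) ^ (r:ℝ) := by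
      rw [ENNReal.ofReal_rpow_of_nonneg dist_nonneg r.coe_nonneg]
      rfl

/-! pieces of the Cantor space -/

def piece (n : ℕ) : Set (ℕ → Bool) := {x | (∀ k < n, x k = true) ∧ x n = false}

def shiftTail (n : ℕ) (x : ℕ → Bool) : ℕ → Bool := fun m => x (n+1+m)

def embedP (n : ℕ) (y : ℕ → Bool) : ℕ → Bool := fun k =>
  if k < n then true else if k = n then false else y (k - (n+1))

lemma embedP_mem (n : ℕ) (y : ℕ → Bool) : embedP n y ∈ piece n :=
  ⟨fun k hk => if_pos hk, by simp [embedP]⟩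

lemma shiftTail_embedP (n : ℕ) (y : ℕ → Bool) : shiftTail n (embedP n y) = y := by
  funext m
  simp only [shiftTail, embedP]
  rw [if_neg (by omega), if_neg (by omega)]
  congr 1
  omega

lemma find_piece {x : ℕ → Bool} {n : ℕ} (hx : x ∈ piece n) (h : ∃ k, x k = false) :
    Nat.find h = n := by
  rw [Nat.find_eq_iff]
  exact ⟨hx.2, fun k hk => by rw [hx.1 k hk]; simp⟩

open Classical in
noncomputable def vmapQ (d : ℕ) (Q : ℕ → (Fin d → ℤ)) (x : ℕ → Bool) :
    EuclideanSpace ℝ (Fin d) :=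
  if h : ∃ k, x k = false then
    ((WithLp.equiv 2 (Fin d → ℝ)).symm (fun i => (Q (Nat.find h) i : ℝ)))
      + Vmap d (shiftTail (Nat.find h) x)
  else 0

lemma vmapQ_eq {d : ℕ} (Q : ℕ → (Fin d → ℤ)) {x : ℕ → Bool} {n : ℕ} (hx : x ∈ piece n) :
    vmapQ d Q x = ((WithLp.equiv 2 (Fin d → ℝ)).symm (fun i => (Q n i : ℝ)))
      + Vmap d (shiftTail n x) := by
  have h : ∃ k, x k = false := ⟨n, hx.2⟩
  rw [vmapQ, dif_pos h, find_piece hx h]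

lemma dist_shiftTail_le {n : ℕ} {x y : ℕ → Bool} (hx : x ∈ piece n) (hy : y ∈ piece n) :
    dist (shiftTail n x) (shiftTail n y) ≤ 2^(n+1) * dist x y := by
  rcases eq_or_ne x y with rfl | hne
  · rw [dist_self, dist_self, mul_zero]
  · have hm := cdist_eq_of_ne hne
    set m := PiNat.firstDiff x y with hmdef
    have hagree : ∀ i < m, x i = y i := fun i hi => PiNat.apply_eq_of_lt_firstDiff hi
    have hdiffne := PiNat.apply_firstDiff_ne hne
    have hmn : n + 1 ≤ m := by
      by_contra hlt
      push_neg at hlt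
      have hmn' : m ≤ n := by omega
      rcases eq_or_lt_of_le hmn' with heq | hlt'
      · refine hdiffne ?_
        rw [← hmdef, heq, hx.2, hy.2]
      · exact hdiffne ((hx.1 m hlt').trans (hy.1 m hlt').symm)
    have hag : ∀ i < m - (n+1), shiftTail n x i = shiftTail n y i := by
      intro i hi
      simp only [shiftTail]
      exact hagree _ (by omega)
    have h1 : dist (shiftTail n x) (shiftTail n y) ≤ (1/2:ℝ)^(m - (n+1)) :=
      cdist_le_of_agree hag
    have h2 : ((1/2:ℝ))^(n+1) * (2:ℝ)^(n+1) = 1 := by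
      rw [← mul_pow]
      norm_num
    have h3 : (1/2:ℝ)^(m-(n+1)) = 2^(n+1) * (1/2:ℝ)^m := by
      have h4 : (m - (n+1)) + (n+1) = m := by omega
      calc (1/2:ℝ)^(m-(n+1)) = (1/2:ℝ)^(m-(n+1)) * ((1/2:ℝ)^(n+1) * 2^(n+1)) := by
            rw [h2, mul_one]
        _ = ((1/2:ℝ)^((m-(n+1)) + (n+1))) * 2^(n+1) := by rw [pow_add]; ring
        _ = 2^(n+1) * (1/2:ℝ)^m := by rw [h4]; ring
    rw [hm]
    rw [h3] at h1
    exact h1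

lemma dist_vmapQ_le {d : ℕ} (hd : 0 < d) (Q : ℕ → (Fin d → ℤ)) {n : ℕ} {x y : ℕ → Bool}
    (hx : x ∈ piece n) (hy : y ∈ piece n) :
    dist (vmapQ d Q x) (vmapQ d Q y)
      ≤ ((Real.sqrt d * 2) * 2^(n+1)) * dist x y ^ ((1:ℝ)/d) := by
  rw [vmapQ_eq Q hx, vmapQ_eq Q hy, dist_add_left]
  have hshift := dist_shiftTail_le hx hy
  have h0 : (0:ℝ) ≤ dist x y := dist_nonneg
  have hrp : dist (shiftTail n x) (shiftTail n y) ^ ((1:ℝ)/d)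
      ≤ (2^(n+1) : ℝ) * dist x y ^ ((1:ℝ)/d) := by
    have h1 : dist (shiftTail n x) (shiftTail n y) ^ ((1:ℝ)/d)
        ≤ ((2^(n+1) : ℝ) * dist x y) ^ ((1:ℝ)/d) :=
      Real.rpow_le_rpow dist_nonneg hshift (by positivity)
    have h2 : ((2^(n+1) : ℝ) * dist x y) ^ ((1:ℝ)/d)
        = (2^(n+1) : ℝ) ^ ((1:ℝ)/d) * dist x y ^ ((1:ℝ)/d) :=
      Real.mul_rpow (by positivity) h0
    have h3 : ((2:ℝ)^(n+1)) ^ ((1:ℝ)/d) ≤ (2:ℝ)^(n+1) := by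
      have h4 : ((2:ℝ)^(n+1)) ^ ((1:ℝ)/d) ≤ ((2:ℝ)^(n+1)) ^ (1:ℝ) := by
        apply Real.rpow_le_rpow_of_exponent_le (one_le_pow₀ (by norm_num))
        rw [div_le_one (by exact_mod_cast hd)]
        exact_mod_cast hd
      rwa [Real.rpow_one] at h4
    calc dist (shiftTail n x) (shiftTail n y) ^ ((1:ℝ)/d)
        ≤ (2^(n+1) : ℝ) ^ ((1:ℝ)/d) * dist x y ^ ((1:ℝ)/d) := h2 ▸ h1
      _ ≤ (2^(n+1) : ℝ) * dist x y ^ ((1:ℝ)/d) := by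
          apply mul_le_mul_of_nonneg_right h3 (Real.rpow_nonneg h0 _)
  calc dist (Vmap d (shiftTail n x)) (Vmap d (shiftTail n y))
      ≤ (Real.sqrt d * 2) * dist (shiftTail n x) (shiftTail n y) ^ ((1:ℝ)/d) :=
        dist_Vmap_le hd _ _
    _ ≤ (Real.sqrt d * 2) * ((2^(n+1) : ℝ) * dist x y ^ ((1:ℝ)/d)) := by
        apply mul_le_mul_of_nonneg_left hrp (by positivity)
    _ = ((Real.sqrt d * 2) * 2^(n+1)) * dist x y ^ ((1:ℝ)/d) := by ring

lemma vmapQ_surj {d : ℕ} (hd : 0 < d) (Q : ℕ → (Fin d → ℤ)) (hQ : Function.Surjective Q)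
    (z : EuclideanSpace ℝ (Fin d)) : ∃ n : ℕ, ∃ x ∈ piece n, vmapQ d Q x = z := by
  obtain ⟨n, hn⟩ := hQ (fun i => ⌊z i⌋)
  have hfr : ∀ i : Fin d, ∃ yi : ℕ → Bool, val2 yi = Int.fract (z i) :=
    fun i => val2_surj ⟨Int.fract_nonneg _, Int.fract_lt_one _⟩
  choose ys hys using hfr
  set Y : ℕ → ℕ → Bool := fun j => if h : j < d then ys ⟨j, h⟩ else fun _ => false with hY
  refine ⟨n, embedP n (mergeF d Y), embedP_mem n _, ?_⟩
  rw [vmapQ_eq Q (embedP_mem n _), shiftTail_embedP]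
  ext i
  have happ : (((WithLp.equiv 2 (Fin d → ℝ)).symm (fun i => (Q n i : ℝ)))
      + Vmap d (mergeF d Y)) i = (Q n i : ℝ) + val2 (sliceF d (i:ℕ) (mergeF d Y)) := rfl
  rw [happ]
  have hsl : sliceF d (i:ℕ) (mergeF d Y) = ys i := by
    rw [sliceF_mergeF hd Y i.2]
    simp only [hY]
    rw [dif_pos i.2]
  rw [hsl, hys i, hn]
  exact Int.floor_add_fract (z i)

end Cantor

/-- For every `d ≥ 1`, `non(HDZ) = non(HDZ_{ℝ^d})` and
`cov(HDZ) = cov(HDZ_{ℝ^d})`, where `HDZ = HDZ_{2^ω}`. -/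
theorem stmt7 (d : ℕ) (hd : 0 < d) :
    idealNon (HDZ (ℕ → Bool)) = idealNon (HDZ (EuclideanSpace ℝ (Fin d))) ∧
    idealCov (HDZ (ℕ → Bool)) = idealCov (HDZ (EuclideanSpace ℝ (Fin d))) := by
  classical
  -- the embedding side
  have hfemb : ∀ a b : ℕ → Bool, femb d a = femb d b → a = b := by
    intro a b hab
    have := cdist_le_femb hd a b
    rw [hab, dist_self, Real.zero_rpow r0_pos.ne', mul_zero] at this
    exact eq_of_dist_eq_zero (le_antisymm this dist_nonneg)
  set u0 : EuclideanSpace ℝ (Fin d) → (ℕ → Bool) := fun z =>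
    if h : ∃ x, femb d x = z then Classical.choose h else fun _ => false with hu0
  have hu0spec : ∀ z ∈ range (femb d), femb d (u0 z) = z := by
    intro z hz
    obtain ⟨x, rfl⟩ := hz
    simp only [hu0]
    rw [dif_pos ⟨x, rfl⟩]
    exact Classical.choose_spec (⟨x, rfl⟩ : ∃ a, femb d a = femb d x)
  have r0nn_pos : 0 < r0.toNNReal := Real.toNNReal_pos.2 r0_pos
  have hfholder : ∀ _n : ℕ, HolderOnWith (2:ℝ).toNNReal r0.toNNReal u0 (range (femb d)) := by
    intro _n
    apply holderOnWith_of_dist (by norm_num)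
    intro z hz w hw
    have h1 := cdist_le_femb hd (u0 z) (u0 w)
    rw [hu0spec z hz, hu0spec w hw] at h1
    rwa [Real.coe_toNNReal _ r0_pos.le]
  have hf : PullsBack (femb d) := by
    apply pullsBack_of_holder_inverses (femb d) (fun _ => u0) (fun _ => range (femb d))
      (fun _ => (2:ℝ).toNNReal) r0.toNNReal r0nn_pos hfholder
    intro x
    refine ⟨0, mem_range_self x, ?_⟩
    exact hfemb _ _ (hu0spec _ (mem_range_self x))
  -- the section side
  obtain ⟨Q, hQ⟩ := exists_surjective_nat (Fin d → ℤ)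
  have hsur := vmapQ_surj hd Q hQ
  choose nz xz hxz1 hxz2 using hsur
  have r1nn_pos : 0 < ((1:ℝ)/d).toNNReal := Real.toNNReal_pos.2 (by positivity)
  have hgholder : ∀ n : ℕ, HolderOnWith ((Real.sqrt d * 2) * 2^(n+1)).toNNReal
      ((1:ℝ)/d).toNNReal (vmapQ d Q) (piece n) := by
    intro n
    apply holderOnWith_of_dist (by positivity)
    intro x hx y hy
    have h1 := dist_vmapQ_le hd Q hx hy
    rwa [Real.coe_toNNReal _ (by positivity : (0:ℝ) ≤ (1:ℝ)/d)]
  have hg : PullsBack xz := by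
    apply pullsBack_of_holder_inverses xz (fun _ => vmapQ d Q) piece
      (fun n => ((Real.sqrt d * 2) * 2^(n+1)).toNNReal) ((1:ℝ)/d).toNNReal r1nn_pos hgholder
    intro z
    exact ⟨nz z, hxz1 z, hxz2 z⟩
  exact ⟨idealNon_eq hf hg, le_antisymm (idealCov_le hf) (idealCov_le hg)⟩
end

section
/- Let ⟨I_m : m ∈ ω⟩ be a decreasing sequence of σ-ideals over a set X and let I = ⋂_m I_m. Let S = ∏_{n∈ω} {s ⊆ ω : |s| ≤ 2^n}. Suppose that for each m there are maps φ_m : I_m → ω^ω and ψ_m : S → I_m such that for all A ∈ I_m and all T ∈ S: if φ_m(A)(n) ∈ T(n) for all but finitely many n, then A ⊆ ψ_m(T). Then there are maps φ : I → ω^ω and ψ : S → I such that for all A ∈ I and all T ∈ S: if φ(A)(n) ∈ T(n) for all but finitely many n, then A ⊆ ψ(T). (That is, if each Cof(I_m) admits a Galois–Tukey morphism to Lc(ω, 2^id), then so does Cof(I).) -/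
open Set Filter

/-- A σ-ideal on a set `X`: a family of subsets closed under subsets and countable
unions. -/
def IsSigmaIdeal {X : Type*} (I : Set (Set X)) : Prop :=
  (∀ A ∈ I, ∀ B : Set X, B ⊆ A → B ∈ I) ∧
    (∀ A : ℕ → Set X, (∀ n, A n ∈ I) → (⋃ n, A n) ∈ I)

/-- The slaloms `S = ∏_n {s ⊆ ω : |s| ≤ 2^n}`. -/
def Slalom2 : Set (ℕ → Finset ℕ) := {T | ∀ n, (T n).card ≤ 2 ^ n}

/-- Let `⟨I_m : m ∈ ω⟩` be a decreasing sequence of σ-ideals on `X`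
and `I = ⋂_m I_m`. If for each `m` the relational system `Cof(I_m)` admits a
Galois–Tukey morphism to `Lc(ω, 2^id)` — i.e. there are `φ_m : I_m → ω^ω` and
`ψ_m : S → I_m` such that `φ_m(A)(n) ∈ T(n)` for all but finitely many `n` implies
`A ⊆ ψ_m(T)` — then so does `Cof(I)`. -/
theorem stmt18 {X : Type*} (I : ℕ → Set (Set X)) (hσ : ∀ m, IsSigmaIdeal (I m))
    (hdec : ∀ m, I (m + 1) ⊆ I m)
    (hmor : ∀ m, ∃ (φ : Set X → ℕ → ℕ) (ψ : (ℕ → Finset ℕ) → Set X),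
      (∀ T ∈ Slalom2, ψ T ∈ I m) ∧
      ∀ A ∈ I m, ∀ T ∈ Slalom2,
        (∀ᶠ n in atTop, φ A n ∈ T n) → A ⊆ ψ T) :
    ∃ (φ : Set X → ℕ → ℕ) (ψ : (ℕ → Finset ℕ) → Set X),
      (∀ T ∈ Slalom2, ψ T ∈ ⋂ m, I m) ∧
      ∀ A ∈ ⋂ m, I m, ∀ T ∈ Slalom2,
        (∀ᶠ n in atTop, φ A n ∈ T n) → A ⊆ ψ T := by
  choose Φ Ψ hΨ hmt using hmor
  -- decode the m-th coordinate
  set d : ℕ → ℕ → ℕ := fun m t => ((Encodable.decode (α := List ℕ) t).getD []).getD m 0 with hd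
  set der : (ℕ → Finset ℕ) → ℕ → ℕ → Finset ℕ :=
    fun T m k => (T k).image (d m) with hder
  have hderS : ∀ T ∈ Slalom2, ∀ m, der T m ∈ Slalom2 := by
    intro T hT m k
    exact le_trans (Finset.card_image_le) (hT k)
  refine ⟨fun A n => Encodable.encode (List.ofFn fun i : Fin (n + 1) => Φ i A n),
    fun T => ⋂ m, Ψ m (der T m), ?_, ?_⟩
  · intro T hT
    refine mem_iInter.2 fun m => (hσ m).1 _ (hΨ m _ (hderS T hT m)) _ ?_
    exact iInter_subset _ m
  · intro A hA T hT hev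
    refine subset_iInter fun m => hmt m A (mem_iInter.1 hA m) _ (hderS T hT m) ?_
    filter_upwards [hev, eventually_ge_atTop m] with n hn hmn
    have hkey : d m (Encodable.encode (List.ofFn fun i : Fin (n + 1) => Φ i A n))
        = Φ m A n := by
      have hlt : m < n + 1 := Nat.lt_succ_of_le hmn
      simp only [hd, Encodable.encodek, Option.getD_some]
      rw [List.getD_eq_getElem _ _ (by simpa using hlt), List.getElem_ofFn]
    have := Finset.mem_image_of_mem (d m) hn
    rwa [hkey] at this
end
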